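/- Let Y be a 2×n matrix of indeterminates over the field 𝔽₂ with two elements. Then the radical of the ideal I₁(YᵀY) of 𝔽₂[Y] equals the ideal generated by the n linear forms y_{11}+y_{21}, y_{12}+y_{22}, …, y_{1n}+y_{2n}. -/
import Mathlib


open MvPolynomial Matrix

/-- The generic `t × n` matrix `Y` of indeterminates over a base ring `R`. -/
noncomputable def Ysym (R : Type) [CommRing R] (t n : ℕ) :
    Matrix (Fin t) (Fin n) (MvPolynomial (Fin t × Fin n) R) :=
  Matrix.of fun i j => X (i, j)

/-- The symmetric determinantal nullcone ideal `𝔅 = I₁(YᵀY)`, generated by the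
entries of the symmetric matrix `YᵀY`. -/
noncomputable def symB (R : Type) [CommRing R] (t n : ℕ) :
    Ideal (MvPolynomial (Fin t × Fin n) R) :=
  Ideal.span (Set.range fun p : Fin n × Fin n =>
    ((Ysym R t n)ᵀ * Ysym R t n) p.1 p.2)

section Aux
variable (n : ℕ)

noncomputable def auxJ : Ideal (MvPolynomial (Fin 2 × Fin n) (ZMod 2)) :=
  Ideal.span (Set.range fun j : Fin n =>
    (X ((0 : Fin 2), j) + X ((1 : Fin 2), j) : MvPolynomial (Fin 2 × Fin n) (ZMod 2)))

noncomputable def auxPsi : MvPolynomial (Fin 2 × Fin n) (ZMod 2) →ₐ[ZMod 2]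
    MvPolynomial (Fin 2 × Fin n) (ZMod 2) :=
  aeval fun p => X ((0 : Fin 2), p.2)

lemma add_self_zero (p : MvPolynomial (Fin 2 × Fin n) (ZMod 2)) : p + p = 0 := by
  have h2 : (2 : MvPolynomial (Fin 2 × Fin n) (ZMod 2)) = 0 := CharTwo.two_eq_zero
  linear_combination p * h2

lemma sub_psi_mem (p : MvPolynomial (Fin 2 × Fin n) (ZMod 2)) :
    p - auxPsi n p ∈ auxJ n := by
  induction p using MvPolynomial.induction_on with
  | C a => simp [auxPsi]
  | add p q hp hq =>
      have : p + q - auxPsi n (p + q) = (p - auxPsi n p) + (q - auxPsi n q) := by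
        simp only [map_add]; ring
      rw [this]; exact Ideal.add_mem _ hp hq
  | mul_X p i hp =>
      have hψ : auxPsi n (p * X i) = auxPsi n p * X ((0 : Fin 2), i.2) := by
        simp [auxPsi]
      have key : p * X i - auxPsi n (p * X i)
          = p * (X i - X ((0 : Fin 2), i.2)) + (p - auxPsi n p) * X ((0 : Fin 2), i.2) := by
        rw [hψ]; ring
      rw [key]
      refine Ideal.add_mem _ (Ideal.mul_mem_left _ _ ?_) (Ideal.mul_mem_right _ _ hp)
      obtain ⟨i1, j⟩ := i
      rcases (by decide : ∀ x : Fin 2, x = 0 ∨ x = 1) i1 with h | h <;> subst h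
      · simp
      · have heq : (X ((1 : Fin 2), j) - X ((0 : Fin 2), j)
              : MvPolynomial (Fin 2 × Fin n) (ZMod 2))
            = X ((0 : Fin 2), j) + X ((1 : Fin 2), j) := by
          have := add_self_zero n (X ((0 : Fin 2), j) : MvPolynomial (Fin 2 × Fin n) (ZMod 2))
          linear_combination -this
        rw [show ((1 : Fin 2), j).2 = j from rfl, heq]
        exact Ideal.subset_span ⟨j, rfl⟩

lemma ker_psi : RingHom.ker (auxPsi n).toRingHom = auxJ n := by
  apply le_antisymm
  · intro p hp
    have h0 : auxPsi n p = 0 := hp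
    have := sub_psi_mem n p
    rwa [h0, sub_zero] at this
  · rw [auxJ, Ideal.span_le]
    rintro _ ⟨j, rfl⟩
    have : auxPsi n (X ((0 : Fin 2), j) + X ((1 : Fin 2), j)) = 0 := by
      simp [auxPsi, add_self_zero]
    exact this

lemma radical_auxJ : (auxJ n).radical = auxJ n := by
  apply le_antisymm
  · intro p hp
    obtain ⟨k, hk⟩ := hp
    rw [← ker_psi] at hk ⊢
    have hpow : (auxPsi n p) ^ k = 0 := by rw [← map_pow]; exact hk
    exact (pow_eq_zero_iff'.mp hpow).1
  · exact Ideal.le_radical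

end Aux

lemma entry_eq (n : ℕ) (p : Fin n × Fin n) :
    ((Ysym (ZMod 2) 2 n)ᵀ * Ysym (ZMod 2) 2 n) p.1 p.2
      = X ((0 : Fin 2), p.1) * X ((0 : Fin 2), p.2)
        + X ((1 : Fin 2), p.1) * X ((1 : Fin 2), p.2) := by
  simp [Ysym, Matrix.mul_apply, Fin.sum_univ_two]


/-- For a `2 × n` matrix of indeterminates `Y` over the two-element field `𝔽₂`,
the radical of the ideal `I₁(YᵀY)` of `𝔽₂[Y]` is the ideal generated by the `n`
linear forms `y_{1j} + y_{2j}`. -/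
theorem radical_symmetric_nullcone_char_two (n : ℕ) :
    (symB (ZMod 2) 2 n).radical =
      Ideal.span (Set.range fun j : Fin n =>
        (X ((0 : Fin 2), j) + X ((1 : Fin 2), j) :
          MvPolynomial (Fin 2 × Fin n) (ZMod 2))) := by
  have hJ : Ideal.span (Set.range fun j : Fin n =>
      (X ((0 : Fin 2), j) + X ((1 : Fin 2), j) :
        MvPolynomial (Fin 2 × Fin n) (ZMod 2))) = auxJ n := rfl
  rw [hJ]
  apply le_antisymm
  · -- symB ≤ auxJ, then radical_mono and radical_auxJ
    have hle : symB (ZMod 2) 2 n ≤ auxJ n := by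
      rw [symB, Ideal.span_le]
      rintro _ ⟨p, rfl⟩
      show ((Ysym (ZMod 2) 2 n)ᵀ * Ysym (ZMod 2) 2 n) p.1 p.2 ∈ auxJ n
      rw [entry_eq]
      have h2 : (2 : MvPolynomial (Fin 2 × Fin n) (ZMod 2)) = 0 := CharTwo.two_eq_zero
      have hdec : (X ((0 : Fin 2), p.1) : MvPolynomial (Fin 2 × Fin n) (ZMod 2)) * X ((0 : Fin 2), p.2)
            + X ((1 : Fin 2), p.1) * X ((1 : Fin 2), p.2)
          = X ((0 : Fin 2), p.1) * (X ((0 : Fin 2), p.2) + X ((1 : Fin 2), p.2))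
            + (X ((0 : Fin 2), p.1) + X ((1 : Fin 2), p.1)) * X ((1 : Fin 2), p.2) := by
        linear_combination -(X ((0 : Fin 2), p.1) * X ((1 : Fin 2), p.2)) * h2
      rw [hdec]
      exact Ideal.add_mem _
        (Ideal.mul_mem_left _ _ (Ideal.subset_span ⟨p.2, rfl⟩))
        (Ideal.mul_mem_right _ _ (Ideal.subset_span ⟨p.1, rfl⟩))
    calc (symB (ZMod 2) 2 n).radical ≤ (auxJ n).radical := Ideal.radical_mono hle
      _ = auxJ n := radical_auxJ n
  · rw [auxJ, Ideal.span_le]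
    rintro _ ⟨j, rfl⟩
    refine ⟨2, ?_⟩
    have hsq : (X ((0 : Fin 2), j) + X ((1 : Fin 2), j) :
        MvPolynomial (Fin 2 × Fin n) (ZMod 2)) ^ 2
        = ((Ysym (ZMod 2) 2 n)ᵀ * Ysym (ZMod 2) 2 n) j j := by
      rw [entry_eq n (j, j)]
      have := CharTwo.add_sq (X ((0 : Fin 2), j) : MvPolynomial (Fin 2 × Fin n) (ZMod 2))
        (X ((1 : Fin 2), j))
      rw [this]; ring
    rw [hsq]
    exact Ideal.subset_span ⟨(j, j), rfl⟩
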